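/- arXiv:1710.06830 — 3 statements merged into one kernel-verified Lean document; each statement's English description precedes it below -/
import Mathlib

section
/- Let f be a positive linear functional on B(H) and S the Hilbert–Schmidt operator representing f on B₂(H), i.e., f(A) = trace(S*A) for all A ∈ B₂(H). Then S is a trace class operator, and trace(S) ≤ f(I). (One shows that for every finite subset F of an orthonormal basis, ∑_{e∈F} ⟨Se,e⟩ = f(P_F) ≤ f(I), where P_F is the projection onto span F.) -/
open scoped ComplexOrder InnerProductSpace
noncomputable section

variable (H : Type*) [NormedAddCommGroup H] [InnerProductSpace ℂ H] [CompleteSpace H]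

/-- The index set of a fixed Hilbert (orthonormal) basis of `H`. -/
def stdIdx : Set H := (exists_hilbertBasis ℂ H).choose

/-- A fixed Hilbert (orthonormal) basis of `H`. -/
def stdBasis : HilbertBasis (stdIdx H) ℂ H := (exists_hilbertBasis ℂ H).choose_spec.choose

/-- `S` is a Hilbert–Schmidt operator. -/
def IsHilbertSchmidt (S : H →L[ℂ] H) : Prop :=
  Summable fun i => ‖S (stdBasis H i)‖ ^ 2

/-- `S` is a trace class operator: the product of two Hilbert–Schmidt operators. -/
def IsTraceClass (S : H →L[ℂ] H) : Prop :=
  ∃ B C : H →L[ℂ] H, IsHilbertSchmidt H B ∧ IsHilbertSchmidt H C ∧ S = B * C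

/-- The trace of an operator, computed in the fixed basis. -/
def trace (S : H →L[ℂ] H) : ℂ := ∑' i, ⟪(stdBasis H i : H), S (stdBasis H i)⟫_ℂ

/-- A functional on `B(H)` is positive if `f (X⋆ X) ≥ 0` for all `X`. -/
def IsPosFun (f : (H →L[ℂ] H) → ℂ) : Prop := ∀ X : H →L[ℂ] H, 0 ≤ f (star X * X)

/-- `X` has finite rank. -/
def IsFiniteRank (X : H →L[ℂ] H) : Prop := FiniteDimensional ℂ (LinearMap.range (X : H →ₗ[ℂ] H))

/-- A functional on `B(H)` is normal if it is represented by a trace class operator via the trace. -/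
def IsNormalFn (f : (H →L[ℂ] H) → ℂ) : Prop :=
  ∃ F : H →L[ℂ] H, IsTraceClass H F ∧ ∀ X : H →L[ℂ] H, f X = trace H (X * F)

section Aux

open Classical

variable {H}

/-- The rank one operator `v ↦ ⟪x, v⟫ • x`. -/
def rk (x : H) : H →L[ℂ] H := (innerSL ℂ x).smulRight x

lemma rk_apply (x v : H) : rk x v = ⟪x, v⟫_ℂ • x := rfl

lemma rk_isSelfAdjoint (x : H) : IsSelfAdjoint (rk x) := by
  rw [ContinuousLinearMap.isSelfAdjoint_iff_isSymmetric]
  intro u v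
  simp only [ContinuousLinearMap.coe_coe, rk_apply, inner_smul_left, inner_smul_right,
    inner_conj_symm]
  ring

lemma stdBasis_inner (i j : stdIdx H) :
    ⟪(stdBasis H i : H), (stdBasis H j : H)⟫_ℂ = if i = j then 1 else 0 :=
  orthonormal_iff_ite.mp (stdBasis H).orthonormal i j

lemma rk_mul_rk (i j : stdIdx H) :
    rk (stdBasis H i : H) * rk (stdBasis H j : H)
      = if i = j then rk (stdBasis H i : H) else 0 := by
  ext v
  simp only [ContinuousLinearMap.mul_apply, rk_apply, inner_smul_right, stdBasis_inner, smul_smul]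
  by_cases hij : i = j
  · subst hij; simp [rk_apply]
  · simp [hij]

/-- The orthogonal projection onto the span of the basis vectors indexed by `F`. -/
def Pf (F : Finset (stdIdx H)) : H →L[ℂ] H := ∑ i ∈ F, rk (stdBasis H i : H)

lemma Pf_star (F : Finset (stdIdx H)) : star (Pf F) = Pf F := by
  simp only [Pf, star_sum]
  exact Finset.sum_congr rfl fun i _ => (rk_isSelfAdjoint _).star_eq

lemma Pf_mul_Pf (F : Finset (stdIdx H)) : Pf F * Pf F = Pf F := by
  calc Pf F * Pf F
      = ∑ i ∈ F, ∑ j ∈ F, (if i = j then rk (stdBasis H i : H) else 0) := by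
        simp [Pf, Finset.sum_mul, Finset.mul_sum, rk_mul_rk]
    _ = ∑ i ∈ F, rk (stdBasis H i : H) := Finset.sum_congr rfl fun i hi => by
        rw [Finset.sum_ite_eq]; simp [hi]

lemma Pf_apply_basis (F : Finset (stdIdx H)) (j : stdIdx H) :
    Pf F (stdBasis H j) = if j ∈ F then (stdBasis H j : H) else 0 := by
  simp only [Pf, ContinuousLinearMap.sum_apply, rk_apply, stdBasis_inner, ite_smul, one_smul,
    zero_smul]
  simp [Finset.sum_ite_eq']

end Aux

/-- the Hilbert–Schmidt representative `S` of a positive linear functional `f`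
on `B(H)` is trace class, and `trace S ≤ f I`. -/
theorem stmt5 (f : (H →L[ℂ] H) →ₗ[ℂ] ℂ) (hf : IsPosFun H ⇑f)
    (S : H →L[ℂ] H) (hS : IsHilbertSchmidt H S)
    (hrep : ∀ A : H →L[ℂ] H, IsHilbertSchmidt H A → f A = trace H (star S * A)) :
    IsTraceClass H S ∧ trace H S ≤ f 1 := by
  classical
  set b := stdBasis H with hb
  -- f applied to a rank one operator
  have hrkHS : ∀ x : H, IsHilbertSchmidt H (rk x) := by
    intro x
    have h1 : Summable fun i => ‖b.repr x i‖ ^ (ENNReal.toReal 2) :=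
      (lp.memℓp (b.repr x)).summable (by norm_num)
    have h2 : Summable fun i => ‖b.repr x i‖ ^ 2 * ‖x‖ ^ 2 := by
      refine (Summable.mul_right _ ?_)
      simpa using h1
    refine h2.congr fun i => ?_
    rw [rk_apply, norm_smul, mul_pow, b.repr_apply_apply]
    rw [← norm_inner_symm]
  have hfrk : ∀ x : H, f (rk x) = ⟪S x, x⟫_ℂ := by
    intro x
    rw [hrep _ (hrkHS x)]
    unfold trace
    have h1 : ∀ i : stdIdx H, ⟪(b i : H), (star S * rk x) (b i)⟫_ℂ
        = ⟪x, (b i : H)⟫_ℂ * ⟪(b i : H), (star S) x⟫_ℂ := by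
      intro i
      simp only [ContinuousLinearMap.mul_apply, rk_apply, map_smul, inner_smul_right]
    rw [tsum_congr h1, b.tsum_inner_mul_inner x ((star S) x),
      ContinuousLinearMap.star_eq_adjoint, ContinuousLinearMap.adjoint_inner_right]
  -- positivity of S
  have hpos : ∀ x : H, 0 ≤ ⟪S x, x⟫_ℂ := by
    intro x
    rcases eq_or_ne x 0 with rfl | hx
    · simp
    have h1 : star (rk x) * rk x = ((‖x‖ ^ 2 : ℝ) : ℂ) • rk x := by
      rw [(rk_isSelfAdjoint x).star_eq]
      ext v
      simp only [ContinuousLinearMap.mul_apply, rk_apply, inner_smul_right,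
        ContinuousLinearMap.smul_apply, smul_smul]
      rw [inner_self_eq_norm_sq_to_K]
      push_cast
      ring_nf
      rfl
    have h2 := hf (rk x)
    rw [h1, map_smul, smul_eq_mul, hfrk] at h2
    have hxpos : (0 : ℝ) < ‖x‖ ^ 2 := pow_pos (norm_pos_iff.mpr hx) 2
    have h3 : (0 : ℂ) ≤ (((‖x‖ ^ 2)⁻¹ : ℝ) : ℂ) * (((‖x‖ ^ 2 : ℝ) : ℂ) * ⟪S x, x⟫_ℂ) :=
      mul_nonneg (Complex.zero_le_real.mpr (inv_nonneg.mpr (by positivity))) h2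
    rwa [← mul_assoc, ← Complex.ofReal_mul, inv_mul_cancel₀ hxpos.ne', Complex.ofReal_one,
      one_mul] at h3
  have hP : S.IsPositive := by
    rw [ContinuousLinearMap.isPositive_iff_complex]
    intro x
    obtain ⟨h1, h2⟩ := Complex.nonneg_iff.mp (hpos x)
    constructor
    · exact Complex.ext (by simp) (by simpa using h2)
    · simpa using h1
  have hSnn : (0 : H →L[ℂ] H) ≤ S := (ContinuousLinearMap.nonneg_iff_isPositive S).mpr hP
  have hsa : IsSelfAdjoint S := hP.isSelfAdjoint
  have hdiag : ∀ x : H, ⟪x, S x⟫_ℂ = ⟪S x, x⟫_ℂ := by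
    intro x
    conv_rhs => rw [← hsa.adjoint_eq]
    rw [ContinuousLinearMap.adjoint_inner_left]
  -- diagonal entries
  set d : stdIdx H → ℝ := fun i => Complex.re ⟪S (b i), (b i : H)⟫_ℂ with hd
  have hdre : ∀ i, ((d i : ℝ) : ℂ) = ⟪S (b i), (b i : H)⟫_ℂ := by
    intro i
    obtain ⟨h1, h2⟩ := Complex.nonneg_iff.mp (hpos (b i))
    exact Complex.ext (by simp [hd]) (by simp [hd, ← h2])
  have hdnn : ∀ i, 0 ≤ d i := fun i => (Complex.nonneg_iff.mp (hpos (b i))).1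
  -- f on finite projections
  have hPfHS : ∀ F : Finset (stdIdx H), IsHilbertSchmidt H (Pf F) := by
    intro F
    refine summable_of_ne_finset_zero (s := F) fun i hi => ?_
    simp [Pf_apply_basis, hi, hb]
  have hfPf : ∀ F : Finset (stdIdx H), f (Pf F) = ∑ i ∈ F, ((d i : ℝ) : ℂ) := by
    intro F
    rw [hrep _ (hPfHS F)]
    unfold trace
    rw [tsum_eq_sum (s := F) (by
      intro i hi
      simp [ContinuousLinearMap.mul_apply, Pf_apply_basis, hi, hb])]
    refine Finset.sum_congr rfl fun i hi => ?_
    rw [ContinuousLinearMap.mul_apply, Pf_apply_basis]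
    simp only [hb, hi, if_pos]
    rw [ContinuousLinearMap.star_eq_adjoint, ContinuousLinearMap.adjoint_inner_right, hdre]
  -- partial sums bounded by f 1
  have hbound : ∀ F : Finset (stdIdx H), ∑ i ∈ F, ((d i : ℝ) : ℂ) ≤ f 1 := by
    intro F
    have hQ := hf (1 - Pf F)
    have hstar : star (1 - Pf F) = 1 - Pf F := by rw [star_sub, star_one, Pf_star]
    have hmul : (1 - Pf F) * (1 - Pf F) = 1 - Pf F := by
      rw [sub_mul, one_mul, mul_sub, mul_one, Pf_mul_Pf]
      abel
    rw [hstar, hmul, map_sub] at hQ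
    have := sub_nonneg.mp hQ
    rw [hfPf] at this
    exact this
  have hf1 : 0 ≤ f 1 := by simpa using hf 1
  have hboundre : ∀ F : Finset (stdIdx H), ∑ i ∈ F, d i ≤ (f 1).re := by
    intro F
    have h := hbound F
    rw [← Complex.ofReal_sum] at h
    obtain ⟨h1re, _⟩ := (Complex.le_def.mp h)
    simpa using h1re
  have hdsum : Summable d := summable_of_sum_le hdnn hboundre
  -- square root of S
  set B : H →L[ℂ] H := CFC.sqrt S with hBdef
  have hB2 : B * B = S := CFC.sqrt_mul_sqrt_self S hSnn
  have hBsa : IsSelfAdjoint B := (CFC.sqrt_nonneg (a := S)).isSelfAdjoint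
  have hBnorm : ∀ i, ‖B (b i)‖ ^ 2 = d i := by
    intro i
    have hcalc : ⟪B (b i), B (b i)⟫_ℂ = ⟪S (b i), (b i : H)⟫_ℂ := by
      rw [← ContinuousLinearMap.adjoint_inner_right, hBsa.adjoint_eq,
        ← ContinuousLinearMap.mul_apply, hB2, hdiag]
    rw [← inner_self_eq_norm_sq (𝕜 := ℂ), hcalc]
    simp [hd]
  have hBHS : IsHilbertSchmidt H B := hdsum.congr fun i => (hBnorm i).symm
  refine ⟨⟨B, B, hBHS, hBHS, hB2.symm⟩, ?_⟩
  -- the trace inequality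
  have htr : trace H S = ((∑' i, d i : ℝ) : ℂ) := by
    unfold trace
    rw [Complex.ofReal_tsum]
    exact tsum_congr fun i => by rw [hdre, ← hdiag]
  rw [htr]
  calc ((∑' i, d i : ℝ) : ℂ) ≤ (((f 1).re : ℝ) : ℂ) := by
        rw [Complex.real_le_real]
        exact Summable.tsum_le_of_sum_le hdsum hboundre
    _ = f 1 := by
        obtain ⟨_, him⟩ := Complex.nonneg_iff.mp hf1
        exact Complex.ext (by simp) (by simpa using him)
end
end

section
/- Let h be a positive linear functional on B(H) that vanishes on all finite rank operators. If h ≤ g for some normal positive functional g (i.e., g − h is positive), then h = 0. -/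
open scoped ComplexOrder InnerProductSpace
noncomputable section

variable (H : Type*) [NormedAddCommGroup H] [InnerProductSpace ℂ H] [CompleteSpace H]

/-- Parseval's identity for a Hilbert basis. -/
theorem my_parseval {ι E : Type*} [NormedAddCommGroup E] [InnerProductSpace ℂ E]
    (b : HilbertBasis ι ℂ E) (x : E) : HasSum (fun i => ‖⟪b i, x⟫_ℂ‖ ^ 2) (‖x‖ ^ 2) := by
  have h := b.hasSum_inner_mul_inner x x
  have e : ∀ i, ⟪x, b i⟫_ℂ * ⟪b i, x⟫_ℂ = ((‖⟪b i, x⟫_ℂ‖ ^ 2 : ℝ) : ℂ) := by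
    intro i
    rw [← inner_conj_symm (b i) x, Complex.mul_conj', RCLike.norm_conj,
      Complex.ofReal_pow]
  simp_rw [e] at h
  have hx : ⟪x, x⟫_ℂ = ((‖x‖ ^ 2 : ℝ) : ℂ) := by
    rw [inner_self_eq_norm_sq_to_K]; norm_cast
  rw [hx] at h
  exact (Complex.hasSum_ofReal ..).mp h

open scoped NNReal ENNReal in
theorem my_parseval_ennreal {ι E : Type*} [NormedAddCommGroup E] [InnerProductSpace ℂ E]
    (b : HilbertBasis ι ℂ E) (x : E) :
    ∑' j, ((‖⟪b j, x⟫_ℂ‖₊ ^ 2 : ℝ≥0) : ℝ≥0∞) = ((‖x‖₊ ^ 2 : ℝ≥0) : ℝ≥0∞) := by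
  have h := my_parseval b x
  have h2 : HasSum (fun j => (‖⟪b j, x⟫_ℂ‖₊ ^ 2 : ℝ≥0)) (‖x‖₊ ^ 2) := by
    rw [← NNReal.hasSum_coe]
    push_cast
    exact h
  rw [← h2.tsum_eq, ENNReal.coe_tsum h2.summable]

open scoped NNReal ENNReal in
/-- The adjoint of a Hilbert–Schmidt operator is Hilbert–Schmidt (for a given basis). -/
theorem my_hs_adjoint {ι E : Type*} [NormedAddCommGroup E] [InnerProductSpace ℂ E]
    [CompleteSpace E]
    (b : HilbertBasis ι ℂ E) (B : E →L[ℂ] E) (hB : Summable fun i => ‖B (b i)‖ ^ 2) :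
    Summable fun i => ‖(ContinuousLinearMap.adjoint B) (b i)‖ ^ 2 := by
  have key : ∑' i, ((‖(ContinuousLinearMap.adjoint B) (b i)‖₊ ^ 2 : ℝ≥0) : ℝ≥0∞) ≠ ⊤ := by
    have e1 : ∀ i j, ‖⟪b j, (ContinuousLinearMap.adjoint B) (b i)⟫_ℂ‖₊ = ‖⟪b i, B (b j)⟫_ℂ‖₊ := by
      intro i j
      rw [ContinuousLinearMap.adjoint_inner_right, ← inner_conj_symm (b i), RCLike.nnnorm_conj]
    calc ∑' i, ((‖(ContinuousLinearMap.adjoint B) (b i)‖₊ ^ 2 : ℝ≥0) : ℝ≥0∞)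
        = ∑' i, ∑' j, ((‖⟪b j, (ContinuousLinearMap.adjoint B) (b i)⟫_ℂ‖₊ ^ 2 : ℝ≥0) : ℝ≥0∞) := by
          simp_rw [my_parseval_ennreal]
      _ = ∑' j, ∑' i, ((‖⟪b i, B (b j)⟫_ℂ‖₊ ^ 2 : ℝ≥0) : ℝ≥0∞) := by
          rw [ENNReal.tsum_comm]
          congr 1; ext j; congr 1; ext i; rw [e1]
      _ = ∑' j, ((‖B (b j)‖₊ ^ 2 : ℝ≥0) : ℝ≥0∞) := by simp_rw [my_parseval_ennreal]
      _ ≠ ⊤ := by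
          rw [ENNReal.tsum_coe_ne_top_iff_summable, ← NNReal.summable_coe]
          convert hB using 2 with j
          simp
  rw [ENNReal.tsum_coe_ne_top_iff_summable, ← NNReal.summable_coe] at key
  convert key using 2 with i
  simp

theorem my_expand1 {R : Type*} [Ring R] [StarRing R] (X : R) :
    star (X + 1) * (X + 1) = star X * X + star X + X + 1 := by
  rw [star_add, star_one, add_mul, mul_add, mul_add, one_mul, mul_one]
  simp only [one_mul, mul_one]
  abel

theorem my_expand2 {R : Type*} [Ring R] [StarRing R] [Algebra ℂ R] [StarModule ℂ R] (X : R) :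
    star (X + Complex.I • 1) * (X + Complex.I • 1) =
      star X * X + Complex.I • star X - Complex.I • X + 1 := by
  rw [star_add, star_smul, star_one, Complex.star_def, Complex.conj_I]
  noncomm_ring
  simp [smul_smul, Complex.I_mul_I]
  abel

theorem my_expand3 {R : Type*} [Ring R] [StarRing R] [Algebra ℂ R] [StarModule ℂ R]
    (X : R) (c : ℂ) :
    star (c • 1 + X) * (c • 1 + X) =
      ((starRingEnd ℂ) c * c) • 1 + (starRingEnd ℂ) c • X + c • star X + star X * X := by
  rw [star_add, star_smul, star_one, Complex.star_def]
  noncomm_ring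
  simp only [smul_add, smul_smul, mul_comm]
  abel

/-- a positive linear functional vanishing on finite rank operators which is
dominated by a normal positive functional is zero. -/
theorem stmt7 (h g : (H →L[ℂ] H) →ₗ[ℂ] ℂ) (hpos : IsPosFun H ⇑h)
    (hvanish : ∀ A : H →L[ℂ] H, IsFiniteRank H A → h A = 0)
    (T : H →L[ℂ] H) (hT : T.IsPositive) (hTtc : IsTraceClass H T)
    (hg : ∀ X : H →L[ℂ] H, g X = trace H (X * T))
    (hle : IsPosFun H fun X => g X - h X) :
    h = 0 := by
  classical
  set b := stdBasis H with hb
  obtain ⟨B, C, hB, hC, hBC⟩ := hTtc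
  -- the diagonal of T
  set a : stdIdx H → ℂ := fun i => ⟪(b i : H), T (b i)⟫_ℂ with ha
  set r : stdIdx H → ℝ := fun i => (a i).re with hr
  have har : ∀ i, a i = ((r i : ℝ) : ℂ) := by
    intro i
    have him : (a i).im = 0 := by
      have h1 : ⟪T (b i), (b i : H)⟫_ℂ = ⟪(b i : H), T (b i)⟫_ℂ :=
        hT.isSelfAdjoint.isSymmetric (b i) (b i)
      have h2 : (starRingEnd ℂ) (a i) = a i := by
        rw [ha]; simp only; rw [inner_conj_symm, h1]
      have := congrArg Complex.im h2
      simp only [Complex.conj_im] at this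
      linarith
    apply Complex.ext <;> simp [hr, him]
  have hrnn : ∀ i, 0 ≤ r i := fun i => (Complex.nonneg_iff.mp (hT.inner_nonneg_right (b i))).1
  -- summability of the diagonal
  have hrsum : Summable r := by
    have hBadj := my_hs_adjoint b B hB
    have hbound : ∀ i, r i ≤ (‖(ContinuousLinearMap.adjoint B) (b i)‖ ^ 2 + ‖C (b i)‖ ^ 2) / 2 := by
      intro i
      have h1 : a i = ⟪(ContinuousLinearMap.adjoint B) (b i), C (b i)⟫_ℂ := by
        rw [ha]; simp only
        rw [hBC, ContinuousLinearMap.adjoint_inner_left, ContinuousLinearMap.mul_apply]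
      have h2 : r i ≤ ‖a i‖ := by
        rw [hr]; exact Complex.re_le_norm _
      have h3 : ‖a i‖ ≤ ‖(ContinuousLinearMap.adjoint B) (b i)‖ * ‖C (b i)‖ := by
        rw [h1]; exact norm_inner_le_norm _ _
      nlinarith [sq_nonneg (‖(ContinuousLinearMap.adjoint B) (b i)‖ - ‖C (b i)‖),
        norm_nonneg ((ContinuousLinearMap.adjoint B) (b i)), norm_nonneg (C (b i))]
    exact Summable.of_nonneg_of_le hrnn hbound (((hBadj.add hC)).div_const 2)
  have hasum : HasSum a ((∑' i, r i : ℝ) : ℂ) := by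
    have := (Complex.hasSum_ofReal (f := r) (x := ∑' i, r i)).mpr hrsum.hasSum
    convert this using 1
    funext i; rw [har]
  -- `h 1 = 0`
  have h1zero : h 1 = 0 := by
    have h1nn : 0 ≤ h 1 := by simpa using hpos 1
    have hre_le : ∀ ε : ℝ, 0 < ε → (h 1).re < ε := by
      intro ε hε
      -- choose a finite set with small tail
      obtain ⟨F, hF⟩ : ∃ F : Finset (stdIdx H), |∑ i ∈ F, r i - ∑' i, r i| < ε := by
        have h2 := Metric.tendsto_nhds.mp hrsum.hasSum (ε := ε) hε
        obtain ⟨F, hF⟩ := h2.exists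
        exact ⟨F, by simpa [Real.dist_eq] using hF⟩
      -- the projection onto the span of basis vectors indexed by F
      set K : Submodule ℂ H := Submodule.span ℂ (↑(F.image fun i => (b i : H)) : Set H) with hK
      haveI : FiniteDimensional ℂ K := by rw [hK]; infer_instance
      set P : H →L[ℂ] H := K.subtypeL ∘L K.orthogonalProjectionOnto with hP
      have hPsa : IsSelfAdjoint P := isSelfAdjoint_starProjection K
      have hPapp : ∀ x : H, P x = ↑(K.orthogonalProjectionOnto x) := fun x => rfl
      have hPidem : P * P = P := by
        ext x
        show P (P x) = P x
        rw [hPapp (P x), hPapp x, Submodule.orthogonalProjectionOnto_mem_subspace_eq_self]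
      have hPmem : ∀ i ∈ F, P (b i) = b i := by
        intro i hi
        rw [hPapp, ← Submodule.starProjection_apply, Submodule.starProjection_eq_self_iff.mpr]
        exact Submodule.subset_span (Finset.mem_image_of_mem _ hi)
      have hPnot : ∀ i ∉ F, P (b i) = 0 := by
        intro i hi
        have hmem : (b i : H) ∈ Kᗮ := by
          rw [Submodule.mem_orthogonal]
          intro u hu
          induction hu using Submodule.span_induction with
          | mem u hu =>
            obtain ⟨j, hj, rfl⟩ := Finset.mem_image.mp hu
            have : j ≠ i := fun hji => hi (hji ▸ hj)
            exact (orthonormal_iff_ite.mp b.orthonormal j i).trans (if_neg this)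
          | zero => exact inner_zero_left _
          | add u v _ _ hu hv => rw [inner_add_left, hu, hv, add_zero]
          | smul c u _ hu => rw [inner_smul_left, hu, mul_zero]
        rw [hPapp, Submodule.orthogonalProjectionOnto_apply_of_mem_orthogonal hmem,
          Submodule.coe_zero]
      -- h P = 0
      have hPfr : IsFiniteRank H P := by
        have hle' : LinearMap.range (P : H →ₗ[ℂ] H) ≤ K := by
          rintro y ⟨x, rfl⟩
          exact (K.orthogonalProjectionOnto x).2
        exact Submodule.finiteDimensional_of_le hle'
      have hhP : h P = 0 := hvanish P hPfr
      -- star (1 - P) * (1 - P) = 1 - P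
      have hQ : star (1 - P) * (1 - P) = 1 - P := by
        rw [star_sub, star_one, hPsa.star_eq]
        rw [mul_sub, sub_mul, sub_mul, one_mul, mul_one, hPidem]
        abel
      -- h (1 - P) ≤ g (1 - P) and re computation
      have hle1 : 0 ≤ g (1 - P) - h (1 - P) := by
        have := hle (1 - P); rwa [hQ] at this
      have hpos1 : 0 ≤ h (1 - P) := by
        have := hpos (1 - P); rwa [hQ] at this
      -- trace computation
      have htr : g (1 - P) = ((∑' i, r i : ℝ) : ℂ) - ∑ i ∈ F, a i := by
        rw [hg, trace]
        have hterm : ∀ i, ⟪(b i : H), ((1 - P) * T) (b i)⟫_ℂ =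
            a i - (if i ∈ F then a i else 0) := by
          intro i
          rw [ContinuousLinearMap.mul_apply, ContinuousLinearMap.sub_apply,
            ContinuousLinearMap.one_apply, inner_sub_right]
          have hsym : ⟪(b i : H), P (T (b i))⟫_ℂ = ⟪P (b i), T (b i)⟫_ℂ :=
            (hPsa.isSymmetric (b i) (T (b i))).symm
          by_cases hi : i ∈ F
          · rw [if_pos hi, hsym, hPmem i hi]
          · rw [if_neg hi, hsym, hPnot i hi, inner_zero_left, sub_zero]
        have hFsum : HasSum (fun i => if i ∈ F then a i else 0) (∑ i ∈ F, a i) := by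
          have h0 := hasSum_sum_of_ne_finset_zero (s := F) (L := SummationFilter.unconditional _)
            (f := fun i => if i ∈ F then a i else 0) (fun i hi => if_neg hi)
          rwa [Finset.sum_congr rfl (fun i hi => if_pos hi)] at h0
        have := hasum.sub hFsum
        rw [← this.tsum_eq]
        exact tsum_congr hterm
      -- conclude
      have hh1 : h 1 = h (1 - P) + h P := by
        rw [← map_add]; congr 1; abel
      have him : (h 1).re = (h (1 - P)).re := by rw [hh1, hhP, add_zero]
      have hrle : (h (1 - P)).re ≤ (g (1 - P)).re := by
        have := (Complex.nonneg_iff.mp hle1).1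
        simp only [Complex.sub_re] at this
        linarith
      have hgre : (g (1 - P)).re = (∑' i, r i) - ∑ i ∈ F, r i := by
        rw [htr]
        simp only [Complex.sub_re, Complex.ofReal_re, Complex.re_sum]
        rfl
      have : (h 1).re ≤ (∑' i, r i) - ∑ i ∈ F, r i := by
        rw [him, ← hgre] at *; linarith
      calc (h 1).re ≤ (∑' i, r i) - ∑ i ∈ F, r i := this
        _ ≤ |∑ i ∈ F, r i - ∑' i, r i| := by rw [abs_sub_comm]; exact le_abs_self _
        _ < ε := hF
    have hre0 : (h 1).re ≤ 0 := by
      by_contra hc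
      push_neg at hc
      exact absurd (hre_le _ hc) (lt_irrefl _)
    obtain ⟨hre, him⟩ := Complex.nonneg_iff.mp h1nn
    exact Complex.ext (le_antisymm hre0 hre) him.symm
  -- now conclude h = 0 from h 1 = 0 via Cauchy–Schwarz-type argument
  ext X
  simp only [LinearMap.zero_apply]
  set u : ℂ := h X with hu
  by_contra hne
  have hnormsq : 0 < Complex.normSq u := by
    exact Complex.normSq_pos.mpr hne
  -- h (star X) = conj (h X)
  have hstar : h (star X) = (starRingEnd ℂ) u := by
    have e1 := my_expand1 X
    have e2 := my_expand2 X
    have q1 := hpos (X + 1)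
    rw [e1] at q1
    have q2 := hpos (X + Complex.I • 1)
    rw [e2] at q2
    have l1 : h (star X * X + star X + X + 1) = h (star X * X) + h (star X) + u + h 1 := by
      simp [map_add, hu]
    have l2 : h (star X * X + Complex.I • star X - Complex.I • X + 1) =
        h (star X * X) + Complex.I * h (star X) - Complex.I * u + h 1 := by
      simp [map_add, map_sub, map_smul, smul_eq_mul, hu]
    rw [l1] at q1; rw [l2] at q2
    have hxx := Complex.nonneg_iff.mp (hpos X)
    have hone := Complex.nonneg_iff.mp (by simpa using hpos 1 : (0:ℂ) ≤ h 1)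
    obtain ⟨_, him1⟩ := Complex.nonneg_iff.mp q1
    obtain ⟨_, him2⟩ := Complex.nonneg_iff.mp q2
    simp only [Complex.add_im, Complex.sub_im, Complex.mul_im, Complex.I_re, Complex.I_im] at him1 him2
    apply Complex.ext
    · rw [Complex.conj_re]; linarith [him2, hxx.2, hone.2]
    · rw [Complex.conj_im]; linarith [him1, hxx.2, hone.2]
  -- positivity with scalar perturbation
  have key : ∀ t : ℝ, 0 < t →
      0 ≤ (h (star X * X)).re - 2 * t * Complex.normSq u := by
    intro t ht
    set c : ℂ := ((-t : ℝ) : ℂ) * u with hc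
    have e3 := my_expand3 X c
    have q := hpos (c • 1 + X)
    rw [e3] at q
    have l3 : h (((starRingEnd ℂ) c * c) • 1 + (starRingEnd ℂ) c • X + c • star X + star X * X) =
        ((starRingEnd ℂ) c * c) * h 1 + (starRingEnd ℂ) c * u + c * ((starRingEnd ℂ) u) +
          h (star X * X) := by
      simp [map_add, map_smul, smul_eq_mul, hstar, hu]
    rw [l3, h1zero, mul_zero, zero_add] at q
    have hval : (starRingEnd ℂ) c * u + c * ((starRingEnd ℂ) u) =
        ((-2 * t * Complex.normSq u : ℝ) : ℂ) := by
      rw [hc, map_mul, Complex.conj_ofReal]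
      have h2 : u * (starRingEnd ℂ) u = (Complex.normSq u : ℂ) := Complex.mul_conj u
      have h1 : (starRingEnd ℂ) u * u = (Complex.normSq u : ℂ) := by rw [mul_comm]; exact h2
      push_cast
      linear_combination (-(t:ℂ)) * h1 + (-(t:ℂ)) * h2
    rw [hval] at q
    obtain ⟨hq, _⟩ := Complex.nonneg_iff.mp q
    simp only [Complex.add_re, Complex.ofReal_re] at hq
    linarith
  have hXXre : 0 ≤ (h (star X * X)).re := (Complex.nonneg_iff.mp (hpos X)).1
  have hkey := key (((h (star X * X)).re + 1) / Complex.normSq u)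
    (div_pos (by linarith) hnormsq)
  have hcancel : 2 * (((h (star X * X)).re + 1) / Complex.normSq u) * Complex.normSq u
      = 2 * ((h (star X * X)).re + 1) := by
    field_simp
  rw [hcancel] at hkey
  linarith
end
end

section
/- Let f be a normal positive functional on B(H) with f = f_S for a positive trace class operator S, and let φ be the restriction of f to the finite rank operators B_F(H). Then f is the smallest positive extension of φ: for every positive linear functional g on B(H) with g = φ on B_F(H), one has f ≤ g (i.e., g − f is positive). -/
open scoped ComplexOrder InnerProductSpace
noncomputable section

set_option maxHeartbeats 2000000
set_option synthInstance.maxHeartbeats 1000000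

variable (H : Type*) [NormedAddCommGroup H] [InnerProductSpace ℂ H] [CompleteSpace H]

section Stmt11Helpers

variable {H}


lemma hasSum_normSq (x : H) :
    HasSum (fun i => ‖⟪(stdBasis H i : H), x⟫_ℂ‖ ^ 2) (‖x‖ ^ 2) := by
  have h := (stdBasis H).hasSum_inner_mul_inner x x
  have h2 : ∀ i, ⟪x, (stdBasis H i : H)⟫_ℂ * ⟪(stdBasis H i : H), x⟫_ℂ
      = ((‖⟪(stdBasis H i : H), x⟫_ℂ‖ ^ 2 : ℝ) : ℂ) := by
    intro i
    rw [← inner_conj_symm (stdBasis H i : H) x, Complex.mul_conj']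
    norm_cast
    simp [Complex.normSq_eq_norm_sq, Complex.norm_conj]
    exact norm_inner_symm _ _
  rw [funext h2] at h
  have h3 : ⟪x, x⟫_ℂ = ((‖x‖ ^ 2 : ℝ) : ℂ) := by
    rw [inner_self_eq_norm_sq_to_K]; norm_cast
  rw [h3] at h
  exact Complex.hasSum_ofReal.mp h

open ContinuousLinearMap in
lemma adjoint_hs (A : H →L[ℂ] H) (hA : Summable fun i => ‖A (stdBasis H i)‖ ^ 2) :
    HasSum (fun j => ‖adjoint A (stdBasis H j)‖ ^ 2) (∑' i, ‖A (stdBasis H i)‖ ^ 2) := by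
  set e := stdBasis H
  set n : ↑(stdIdx H) × ↑(stdIdx H) → ℝ := fun p => ‖⟪(e p.2 : H), A (e p.1)⟫_ℂ‖ ^ 2 with hn
  have hfib : ∀ i, HasSum (fun j => n (i, j)) (‖A (e i)‖ ^ 2) := fun i => hasSum_normSq (A (e i))
  have hprod : Summable n := by
    refine (summable_prod_of_nonneg ?_).mpr ⟨fun i => (hfib i).summable, ?_⟩
    · intro p; positivity
    · refine hA.congr fun i => ?_
      exact ((hfib i).tsum_eq).symm
  have hswap : ∀ p : ↑(stdIdx H) × ↑(stdIdx H), n p = ‖⟪(e p.1 : H), adjoint A (e p.2)⟫_ℂ‖ ^ 2 := by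
    intro p
    rw [hn]
    simp only
    rw [← adjoint_inner_left, norm_inner_symm]
  have hfib2 : ∀ j, HasSum (fun i => n (i, j)) (‖adjoint A (e j)‖ ^ 2) := by
    intro j
    have h := hasSum_normSq (adjoint A (e j))
    refine HasSum.congr_fun h fun i => ?_
    exact hswap (i, j)
  -- now swap the order of summation
  have hswapsum : Summable fun p : ↑(stdIdx H) × ↑(stdIdx H) => n p.swap :=
    hprod.prod_symm
  have h1 : HasSum (fun j => ‖adjoint A (e j)‖ ^ 2) (∑' p : ↑(stdIdx H) × ↑(stdIdx H), n p) := by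
    have ht : ∑' p : ↑(stdIdx H) × ↑(stdIdx H), n p
        = ∑' p : ↑(stdIdx H) × ↑(stdIdx H), n p.swap := by
      exact ((Equiv.prodComm _ _).tsum_eq fun p => n p).symm.trans rfl
    rw [ht, Summable.tsum_prod hswapsum]
    have hs2 : Summable fun j => ‖adjoint A (e j)‖ ^ 2 := by
      refine (hswapsum.prod.congr fun j => ?_)
      exact ((hfib2 j).tsum_eq)
    refine hs2.hasSum_iff.mpr ?_
    exact tsum_congr fun j => ((hfib2 j).tsum_eq).symm
  have h2 : ∑' p : ↑(stdIdx H) × ↑(stdIdx H), n p = ∑' i, ‖A (e i)‖ ^ 2 := by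
    rw [Summable.tsum_prod hprod]
    exact tsum_congr fun i => (hfib i).tsum_eq
  rw [h2] at h1
  exact h1

lemma finiteRank_of_range_le {A : H →L[ℂ] H} (W : Submodule ℂ H) [FiniteDimensional ℂ W]
    (h : ∀ x, A x ∈ W) : IsFiniteRank H A := by
  have hle : LinearMap.range (A : H →ₗ[ℂ] H) ≤ W := by
    rintro y ⟨x, rfl⟩; exact h x
  exact Submodule.finiteDimensional_of_le hle

lemma finiteRank_finset_sum {α : Type*} (s : Finset α) (f : α → H →L[ℂ] H)
    (hf : ∀ a ∈ s, IsFiniteRank H (f a)) : IsFiniteRank H (∑ a ∈ s, f a) := by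
  classical
  induction s using Finset.induction_on with
  | empty =>
      simp only [Finset.sum_empty]
      refine finiteRank_of_range_le (⊥ : Submodule ℂ H) fun x => ?_
      simp
  | insert _ _ ha ih =>
      rename_i b t
      rw [Finset.sum_insert ha]
      have h1 : IsFiniteRank H (f b) := hf b (Finset.mem_insert_self b t)
      have h2 : IsFiniteRank H (∑ a ∈ t, f a) := ih fun a haa => hf a (Finset.mem_insert_of_mem haa)
      have h1' : FiniteDimensional ℂ (LinearMap.range (f b : H →ₗ[ℂ] H)) := h1
      have h2' : FiniteDimensional ℂ (LinearMap.range ((∑ a ∈ t, f a : H →L[ℂ] H) : H →ₗ[ℂ] H)) := h2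
      refine finiteRank_of_range_le
        (LinearMap.range (f b : H →ₗ[ℂ] H) ⊔ LinearMap.range ((∑ a ∈ t, f a : H →L[ℂ] H) : H →ₗ[ℂ] H)) fun x => ?_
      exact Submodule.mem_sup.mpr ⟨f b x, ⟨x, rfl⟩, (∑ a ∈ t, f a) x, ⟨x, rfl⟩, by simp⟩

open ContinuousLinearMap in
def pj (j : ↑(stdIdx H)) : H →L[ℂ] H :=
  (innerSL ℂ (stdBasis H j : H)).smulRight (stdBasis H j)

lemma pj_apply (j : ↑(stdIdx H)) (x : H) :
    pj j x = ⟪(stdBasis H j : H), x⟫_ℂ • (stdBasis H j : H) := rfl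

open ContinuousLinearMap in
lemma pj_star (j : ↑(stdIdx H)) : star (pj j) = pj (H := H) j := by
  rw [star_eq_adjoint]
  symm
  rw [eq_adjoint_iff]
  intro x y
  simp only [pj_apply, inner_smul_left, inner_smul_right, inner_conj_symm]
  ring

open Classical in
lemma pj_mul_pj (j k : ↑(stdIdx H)) :
    pj j * pj k = if j = k then pj (H := H) j else 0 := by
  have horth := (stdBasis H).orthonormal
  ext x
  simp only [ContinuousLinearMap.mul_apply, pj_apply, inner_smul_right, smul_smul]
  rw [orthonormal_iff_ite.mp horth j k]
  by_cases h : j = k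
  · subst h; simp [pj_apply]
  · simp [h, Ne.symm h]

open Classical in
lemma PF_mul_PF (F : Finset ↑(stdIdx H)) :
    (∑ j ∈ F, pj (H := H) j) * (∑ j ∈ F, pj j) = ∑ j ∈ F, pj j := by
  rw [Finset.sum_mul_sum]
  rw [Finset.sum_congr rfl fun j _ => Finset.sum_congr rfl fun k (_ : k ∈ F) => pj_mul_pj j k]
  refine Finset.sum_congr rfl fun j hj => ?_
  rw [Finset.sum_ite_eq F j (fun _ => pj (H := H) j)]
  simp [hj]

lemma PF_star (F : Finset ↑(stdIdx H)) :
    star (∑ j ∈ F, pj (H := H) j) = ∑ j ∈ F, pj j := by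
  rw [star_sum]
  exact Finset.sum_congr rfl fun j _ => pj_star j

lemma star_compl_mul (X P : H →L[ℂ] H) (hP : star P = P) (hPP : P * P = P) :
    star (X - P * X) * (X - P * X) = star X * X - star X * (P * X) := by
  have h1 : star (X - P * X) = star X - star X * P := by
    rw [star_sub, star_mul, hP]
  rw [h1, sub_mul, mul_sub, mul_sub]
  have h2 : star X * P * (P * X) = star X * (P * X) := by
    rw [mul_assoc (star X) P (P * X), ← mul_assoc P P X, hPP, ← mul_assoc]
  have h3 : star X * P * X = star X * (P * X) := by rw [mul_assoc]
  rw [h2, h3]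
  abel

open ContinuousLinearMap in
lemma finiteRank_rankOne (X : H →L[ℂ] H) (j : ↑(stdIdx H)) :
    IsFiniteRank H (star X * pj j * X) := by
  refine finiteRank_of_range_le (Submodule.span ℂ {star X (stdBasis H j)}) fun x => ?_
  have : (star X * pj j * X) x = ⟪(stdBasis H j : H), X x⟫_ℂ • star X (stdBasis H j) := by
    simp [ContinuousLinearMap.mul_apply, pj_apply, map_smul]
  rw [this]
  exact Submodule.smul_mem _ _ (Submodule.mem_span_singleton_self _)

open ContinuousLinearMap in
lemma hasSum_trace_R (X S T : H →L[ℂ] H) (hSsa : star S = S) (hTsa : star T = T)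
    (hTT : T * T = S) (j : ↑(stdIdx H)) :
    HasSum (fun i => ⟪(stdBasis H i : H), ((star X * pj j * X) * S) (stdBasis H i)⟫_ℂ)
      ((‖T (adjoint X (stdBasis H j))‖ ^ 2 : ℝ) : ℂ) := by
  set e := stdBasis H
  set u := adjoint X (e j) with hu
  have hterm : ∀ i, ⟪(e i : H), ((star X * pj j * X) * S) (e i)⟫_ℂ
      = ⟪S u, (e i : H)⟫_ℂ * ⟪(e i : H), u⟫_ℂ := by
    intro i
    have h1 : ((star X * pj j * X) * S) (e i)
        = ⟪(e j : H), X (S (e i))⟫_ℂ • (star X) (e j) := by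
      simp [ContinuousLinearMap.mul_apply, pj_apply, map_smul]
      rfl
    rw [h1, inner_smul_right, star_eq_adjoint]
    have h2 : ⟪(e j : H), X (S (e i))⟫_ℂ = ⟪S u, (e i : H)⟫_ℂ := by
      rw [← adjoint_inner_left, ← hu]
      nth_rewrite 1 [← hSsa]
      rw [star_eq_adjoint, adjoint_inner_right]
    rw [h2, ← hu]
  have h := (stdBasis H).hasSum_inner_mul_inner (S u) u
  have hval : ⟪S u, u⟫_ℂ = ((‖T u‖ ^ 2 : ℝ) : ℂ) := by
    rw [← hTT]
    have : (T * T) u = T (T u) := rfl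
    rw [this]
    nth_rewrite 1 [← hTsa]
    rw [star_eq_adjoint, adjoint_inner_left, inner_self_eq_norm_sq_to_K]
    exact_mod_cast rfl
  rw [hval] at h
  exact HasSum.congr_fun h hterm

open ContinuousLinearMap in
lemma trace_XXS (X S T : H →L[ℂ] H) (hTsa : star T = T) (hTT : T * T = S)
    (hT_HS : Summable fun i => ‖T (stdBasis H i)‖ ^ 2) :
    trace H ((star X * X) * S)
      = ((∑' j, ‖(X * T) (stdBasis H j)‖ ^ 2 : ℝ) : ℂ) := by
  set e := stdBasis H with he
  set A := X * T with hA
  have hA_HS : Summable fun j => ‖A (e j)‖ ^ 2 := by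
    refine Summable.of_nonneg_of_le (fun j => by positivity) (fun j => ?_)
      (hT_HS.mul_left (‖X‖ ^ 2))
    have : ‖A (e j)‖ ≤ ‖X‖ * ‖T (e j)‖ := (X.le_opNorm (T (e j)))
    calc ‖A (e j)‖ ^ 2 ≤ (‖X‖ * ‖T (e j)‖) ^ 2 := by
          exact pow_le_pow_left₀ (norm_nonneg _) this 2
      _ = ‖X‖ ^ 2 * ‖T (e j)‖ ^ 2 := by ring
  set d : ↑(stdIdx H) × ↑(stdIdx H) → ℂ :=
    fun p => ⟪X (e p.1), A (e p.2)⟫_ℂ * ⟪(e p.2 : H), T (e p.1)⟫_ℂ with hd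
  -- row sums
  have hd_i : ∀ i, HasSum (fun j => d (i, j))
      ⟪(e i : H), ((star X * X) * S) (e i)⟫_ℂ := by
    intro i
    have h := (stdBasis H).hasSum_inner_mul_inner (adjoint A (X (e i))) (T (e i))
    have hterm : ∀ j, d (i, j) = ⟪adjoint A (X (e i)), (e j : H)⟫_ℂ * ⟪(e j : H), T (e i)⟫_ℂ := by
      intro j
      rw [hd]; simp only
      rw [adjoint_inner_left]
    have hval : ⟪adjoint A (X (e i)), T (e i)⟫_ℂ = ⟪(e i : H), ((star X * X) * S) (e i)⟫_ℂ := by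
      rw [adjoint_inner_left]
      have h1 : A (T (e i)) = X (S (e i)) := by
        rw [hA, ← hTT]; rfl
      rw [h1]
      have h2 : ((star X * X) * S) (e i) = star X (X (S (e i))) := rfl
      rw [h2, star_eq_adjoint, adjoint_inner_right]
    rw [hval] at h
    exact HasSum.congr_fun h hterm
  -- column sums
  have hd_j : ∀ j, HasSum (fun i => d (i, j)) ((‖A (e j)‖ ^ 2 : ℝ) : ℂ) := by
    intro j
    have h := (stdBasis H).hasSum_inner_mul_inner (T (e j)) (adjoint X (A (e j)))
    have hterm : ∀ i, d (i, j) = ⟪T (e j), (e i : H)⟫_ℂ * ⟪(e i : H), adjoint X (A (e j))⟫_ℂ := by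
      intro i
      rw [hd]; simp only
      rw [adjoint_inner_right]
      have h2 : (⟪(e j : H), T (e i)⟫_ℂ : ℂ) = ⟪T (e j), (e i : H)⟫_ℂ := by
        nth_rewrite 1 [← hTsa]
        rw [star_eq_adjoint, adjoint_inner_right]
      rw [h2]; ring
    have hval : ⟪T (e j), adjoint X (A (e j))⟫_ℂ = ((‖A (e j)‖ ^ 2 : ℝ) : ℂ) := by
      rw [adjoint_inner_right]
      have h1 : X (T (e j)) = A (e j) := rfl
      rw [h1, inner_self_eq_norm_sq_to_K]
      exact_mod_cast rfl
    rw [hval] at h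
    exact HasSum.congr_fun h hterm
  -- product summability
  have hd_sum : Summable d := by
    have hu : Summable fun q : ↑(stdIdx H) × ↑(stdIdx H) =>
        ‖⟪X (e q.2), A (e q.1)⟫_ℂ‖ ^ 2 := by
      refine (summable_prod_of_nonneg (fun q => by positivity)).mpr ⟨fun j => ?_, ?_⟩
      · have h := hasSum_normSq (adjoint X (A (e j)))
        refine (HasSum.congr_fun h fun i => ?_).summable
        rw [adjoint_inner_right]
      · refine Summable.of_nonneg_of_le (fun j => tsum_nonneg fun i => sq_nonneg _) (fun j => ?_)
          (hA_HS.mul_left (‖adjoint X‖ ^ 2))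
        have h := hasSum_normSq (adjoint X (A (e j)))
        have h2 : ∑' i, ‖⟪X (e i), A (e j)⟫_ℂ‖ ^ 2 = ‖adjoint X (A (e j))‖ ^ 2 := by
          rw [← h.tsum_eq]
          exact tsum_congr fun i => by rw [adjoint_inner_right]
        rw [h2]
        calc ‖adjoint X (A (e j))‖ ^ 2 ≤ (‖adjoint X‖ * ‖A (e j)‖) ^ 2 :=
              pow_le_pow_left₀ (norm_nonneg _) ((adjoint X).le_opNorm _) 2
          _ = ‖adjoint X‖ ^ 2 * ‖A (e j)‖ ^ 2 := by ring
    have hv : Summable fun p : ↑(stdIdx H) × ↑(stdIdx H) =>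
        ‖⟪(e p.2 : H), T (e p.1)⟫_ℂ‖ ^ 2 := by
      refine (summable_prod_of_nonneg (fun p => sq_nonneg _)).mpr ⟨fun i => ?_, ?_⟩
      · exact (hasSum_normSq (T (e i))).summable
      · refine hT_HS.congr fun i => ?_
        exact ((hasSum_normSq (T (e i))).tsum_eq).symm
    refine Summable.of_norm_bounded
      (g := fun p : ↑(stdIdx H) × ↑(stdIdx H) => ‖⟪X (e p.1), A (e p.2)⟫_ℂ‖ ^ 2 / 2 + ‖⟪(e p.2 : H), T (e p.1)⟫_ℂ‖ ^ 2 / 2)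
      (((hu.prod_symm).div_const 2).add (hv.div_const 2)) (fun p => ?_)
    rw [hd]; simp only [norm_mul]
    set a := ‖⟪X (e p.1), A (e p.2)⟫_ℂ‖
    set b := ‖⟪(e p.2 : H), T (e p.1)⟫_ℂ‖
    nlinarith [sq_nonneg (a - b), norm_nonneg (⟪X (e p.1), A (e p.2)⟫_ℂ)]
  -- assemble
  have step1 : trace H ((star X * X) * S) = ∑' p : ↑(stdIdx H) × ↑(stdIdx H), d p := by
    rw [trace, Summable.tsum_prod hd_sum]
    exact tsum_congr fun i => ((hd_i i).tsum_eq).symm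
  have step2 : ∑' p : ↑(stdIdx H) × ↑(stdIdx H), d p = ∑' j, ((‖A (e j)‖ ^ 2 : ℝ) : ℂ) := by
    have e1 : ∑' q : ↑(stdIdx H) × ↑(stdIdx H), d q.swap = ∑' p, d p :=
      (Equiv.prodComm _ _).tsum_eq d
    rw [← e1, Summable.tsum_prod hd_sum.prod_symm]
    exact tsum_congr fun j => (hd_j j).tsum_eq
  have step3 : ∑' j, ((‖A (e j)‖ ^ 2 : ℝ) : ℂ) = ((∑' j, ‖A (e j)‖ ^ 2 : ℝ) : ℂ) :=
    (hA_HS.hasSum.mapL Complex.ofRealCLM).tsum_eq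
  rw [step1, step2, step3]

end Stmt11Helpers

/-- a normal positive functional `f_S` is the smallest positive extension of its
restriction to the finite rank operators: any positive `g` agreeing with it on `B_F(H)`
dominates it. -/
theorem stmt11 (S : H →L[ℂ] H) (hS : S.IsPositive) (hStc : IsTraceClass H S)
    (g : (H →L[ℂ] H) →ₗ[ℂ] ℂ) (hg : IsPosFun H ⇑g)
    (hagree : ∀ A : H →L[ℂ] H, IsFiniteRank H A → g A = trace H (A * S)) :
    IsPosFun H fun X => g X - trace H (X * S) := by
  intro X
  show (0:ℂ) ≤ g (star X * X) - trace H ((star X * X) * S)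
  set e := stdBasis H with he
  have hSnn : (0 : H →L[ℂ] H) ≤ S := (ContinuousLinearMap.nonneg_iff_isPositive S).mpr hS
  set T := CFC.sqrt S with hTdef
  have hTT : T * T = S := CFC.sqrt_mul_sqrt_self S hSnn
  have hTsa : star T = T := IsSelfAdjoint.of_nonneg (CFC.sqrt_nonneg (a := S))
  have hSsa : star S = S := hS.isSelfAdjoint
  obtain ⟨B, C, hB, hC, hBC⟩ := hStc
  have hBadj := adjoint_hs B hB
  -- `T` is Hilbert--Schmidt
  have hSval : ∀ x : H, ⟪x, S x⟫_ℂ = ((‖T x‖ ^ 2 : ℝ) : ℂ) := by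
    intro x
    rw [← hTT]
    have h1 : (T * T) x = T (T x) := rfl
    rw [h1]
    nth_rewrite 1 [← hTsa]
    rw [ContinuousLinearMap.star_eq_adjoint, ContinuousLinearMap.adjoint_inner_right,
      inner_self_eq_norm_sq_to_K]
    exact_mod_cast rfl
  have hT_HS : Summable fun i => ‖T (e i)‖ ^ 2 := by
    refine Summable.of_nonneg_of_le (fun i => sq_nonneg _) (fun i => ?_)
      (((hBadj.summable.add hC).div_const 2))
    have h1 : (‖T (e i)‖ ^ 2 : ℝ) = (⟪(e i : H), S (e i)⟫_ℂ).re := by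
      rw [hSval, Complex.ofReal_re]
    rw [h1, hBC]
    have h2 : ⟪(e i : H), (B * C) (e i)⟫_ℂ
        = ⟪ContinuousLinearMap.adjoint B (e i), C (e i)⟫_ℂ := by
      have : (B * C) (e i) = B (C (e i)) := rfl
      rw [this, ← ContinuousLinearMap.adjoint_inner_left]
    rw [h2]
    calc (⟪ContinuousLinearMap.adjoint B (e i), C (e i)⟫_ℂ).re
        ≤ ‖⟪ContinuousLinearMap.adjoint B (e i), C (e i)⟫_ℂ‖ := Complex.re_le_norm _
      _ ≤ ‖ContinuousLinearMap.adjoint B (e i)‖ * ‖C (e i)‖ := norm_inner_le_norm _ _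
      _ ≤ (‖ContinuousLinearMap.adjoint B (e i)‖ ^ 2 + ‖C (e i)‖ ^ 2) / 2 := by
          nlinarith [sq_nonneg (‖ContinuousLinearMap.adjoint B (e i)‖ - ‖C (e i)‖)]
  -- `X * T` is Hilbert--Schmidt and the trace identity
  have hXT_HS : Summable fun j => ‖(X * T) (e j)‖ ^ 2 := by
    refine Summable.of_nonneg_of_le (fun j => sq_nonneg _) (fun j => ?_)
      (hT_HS.mul_left (‖X‖ ^ 2))
    calc ‖(X * T) (e j)‖ ^ 2 ≤ (‖X‖ * ‖T (e j)‖) ^ 2 :=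
          pow_le_pow_left₀ (norm_nonneg _) (X.le_opNorm (T (e j))) 2
      _ = ‖X‖ ^ 2 * ‖T (e j)‖ ^ 2 := by ring
  have hkey : trace H ((star X * X) * S) = ((∑' j, ‖(X * T) (e j)‖ ^ 2 : ℝ) : ℂ) :=
    trace_XXS X S T hTsa hTT hT_HS
  -- the diagonal family
  set a : ↑(stdIdx H) → ℝ := fun j => ‖T (ContinuousLinearMap.adjoint X (e j))‖ ^ 2 with ha
  have hadj_eq : ContinuousLinearMap.adjoint (X * T) = T * ContinuousLinearMap.adjoint X := by
    rw [← ContinuousLinearMap.star_eq_adjoint, ← ContinuousLinearMap.star_eq_adjoint, star_mul,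
      hTsa]
  have hadj := adjoint_hs (X * T) hXT_HS
  have hadj' : HasSum a (∑' i, ‖(X * T) (e i)‖ ^ 2) := by
    refine HasSum.congr_fun hadj fun j => ?_
    rw [ha]; simp only
    rw [hadj_eq]
    rfl
  -- the finite-rank approximation inequality
  have hgF : ∀ F : Finset ↑(stdIdx H),
      (0:ℂ) ≤ g (star X * X) - ((∑ j ∈ F, a j : ℝ) : ℂ) := by
    intro F
    set P : H →L[ℂ] H := ∑ j ∈ F, pj j with hP
    set AF : H →L[ℂ] H := ∑ j ∈ F, (star X * pj j * X) with hAF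
    have hAF_eq : AF = star X * (P * X) := by
      rw [hAF, hP, Finset.sum_mul, Finset.mul_sum]
      exact Finset.sum_congr rfl fun j _ => by rw [mul_assoc]
    have h_fr : IsFiniteRank H AF :=
      finiteRank_finset_sum F _ fun j _ => finiteRank_rankOne X j
    have hg_AF : g AF = trace H (AF * S) := hagree AF h_fr
    have htr : trace H (AF * S) = ((∑ j ∈ F, a j : ℝ) : ℂ) := by
      have h1 : AF * S = ∑ j ∈ F, ((star X * pj j * X) * S) := by
        rw [hAF, Finset.sum_mul]
      rw [h1, trace]
      have h2 : ∀ i : ↑(stdIdx H),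
          ⟪(stdBasis H i : H), (∑ j ∈ F, ((star X * pj j * X) * S)) (stdBasis H i)⟫_ℂ
          = ∑ j ∈ F, ⟪(stdBasis H i : H), ((star X * pj j * X) * S) (stdBasis H i)⟫_ℂ := by
        intro i
        rw [ContinuousLinearMap.sum_apply, inner_sum]
      rw [tsum_congr h2, Summable.tsum_finsetSum (fun j _ => (hasSum_trace_R X S T hSsa hTsa hTT j).summable)]
      rw [Finset.sum_congr rfl fun j _ => (hasSum_trace_R X S T hSsa hTsa hTT j).tsum_eq]
      simp only [ha]
      push_cast
      rfl
    have hpos := hg (X - P * X)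
    rw [star_compl_mul X P (PF_star F) (PF_mul_PF F), map_sub] at hpos
    have h3 : g (star X * (P * X)) = ((∑ j ∈ F, a j : ℝ) : ℂ) := by
      rw [← hAF_eq, hg_AF, htr]
    rw [h3] at hpos
    exact hpos
  -- pass to the limit
  obtain ⟨hGre, hGim⟩ := Complex.le_def.mp (hg X)
  have hle : (∑' j, a j) ≤ (g (star X * X)).re := by
    refine Summable.tsum_le_of_sum_le hadj'.summable fun F => ?_
    have h := Complex.le_def.mp (hgF F)
    have h1 := h.1
    simpa using h1
  rw [hkey, ← hadj'.tsum_eq]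
  rw [Complex.le_def]
  constructor
  · simpa using hle
  · simp [← hGim]
end
end
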